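/- Let μ be a Borel probability measure on a Polish metric space (X,d) that satisfies a T₁(c) transportation-cost inequality for some c > 0. Then: (i) for any two Borel sets A, B ⊆ X with μ(A), μ(B) > 0, d(A,B) ≤ sqrt(2c ln(1/μ(A))) + sqrt(2c ln(1/μ(B))), where d(A,B) = inf{d(x,y) : x ∈ A, y ∈ B}; and (ii) consequently, μ has the Gaussian concentration property: for every Borel set A with μ(A) ≥ 1/2 and every r ≥ sqrt(2c ln 2), μ(A_r) ≥ 1 − exp(−(r − sqrt(2c ln 2))² / (2c)). (Marton's argument: from transportation to concentration.) -/

import Mathlib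

open MeasureTheory ProbabilityTheory
open scoped ENNReal NNReal Classical

/-- The relative entropy (Kullback–Leibler divergence) `D(Q‖P)`, equal to
`∫ ln(dQ/dP) dQ` when `Q ≪ P` (and the log-likelihood ratio is integrable), and `+∞`
otherwise. -/
noncomputable def relEnt {α : Type*} [MeasurableSpace α] (Q P : Measure α) : ℝ≥0∞ :=
  if Q ≪ P ∧ Integrable (fun x => Real.log (Q.rnDeriv P x).toReal) Q
  then ENNReal.ofReal (∫ x, Real.log (Q.rnDeriv P x).toReal ∂Q) else ⊤

/-- The `Lᵖ` Wasserstein distance associated with a cost (distance) function `d`: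
`W_p(μ,ν) = (inf over couplings π of μ and ν of ∫ d(x,y)^p dπ)^{1/p}`. -/
noncomputable def wassersteinDist {Y : Type*} [MeasurableSpace Y]
    (d : Y → Y → ℝ) (p : ℝ) (μ ν : Measure Y) : ℝ≥0∞ :=
  (⨅ π ∈ {π : Measure (Y × Y) | π.map Prod.fst = μ ∧ π.map Prod.snd = ν},
      ∫⁻ q, ENNReal.ofReal (d q.1 q.2 ^ p) ∂π) ^ p⁻¹

/-- A measure `μ` satisfies the transportation-cost inequality `T_p(c)` with respect to the
distance `d` if `W_p(μ,ν) ≤ √(2c·D(ν‖μ))` for every probability measure `ν ≪ μ`. -/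
def SatisfiesTC {Y : Type*} [MeasurableSpace Y] (d : Y → Y → ℝ) (p c : ℝ)
    (μ : Measure Y) : Prop :=
  ∀ ν : Measure Y, IsProbabilityMeasure ν → ν ≪ μ →
    wassersteinDist d p μ ν ≤ (ENNReal.ofReal (2 * c) * relEnt ν μ) ^ ((1:ℝ)/2)

lemma relEnt_cond {X : Type*} [MeasurableSpace X] (μ : Measure X) [IsProbabilityMeasure μ]
    {A : Set X} (hA : MeasurableSet A) (hA0 : μ A ≠ 0) :
    relEnt (μ[|A]) μ = ENNReal.ofReal (Real.log (1 / (μ A).toReal)) := by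
  set f : X → ℝ≥0∞ := A.indicator (fun _ => (μ A)⁻¹) with hf
  have hfm : Measurable f := measurable_const.indicator hA
  have hν : μ[|A] = μ.withDensity f := by
    rw [hf, withDensity_indicator hA, withDensity_const]; rfl
  have hrn : (μ[|A]).rnDeriv μ =ᵐ[μ] f := by
    rw [hν]; exact Measure.rnDeriv_withDensity μ hfm
  have hac : μ[|A] ≪ μ := cond_absolutelyContinuous
  have hrn' : (μ[|A]).rnDeriv μ =ᵐ[μ[|A]] f := hac.ae_eq hrn
  have hcompl : (μ[|A]) Aᶜ = 0 := by rw [cond_apply hA]; simp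
  have hmemA : ∀ᵐ x ∂(μ[|A]), x ∈ A := by
    rw [ae_iff]
    exact hcompl
  have key : (fun x => Real.log ((μ[|A]).rnDeriv μ x).toReal) =ᵐ[μ[|A]]
      (fun _ => Real.log (1 / (μ A).toReal)) := by
    filter_upwards [hrn', hmemA] with x hx hxA
    rw [hx]
    simp [hf, Set.indicator_of_mem hxA, ENNReal.toReal_inv, one_div]
  have hint : Integrable (fun x => Real.log ((μ[|A]).rnDeriv μ x).toReal) (μ[|A]) :=
    (integrable_const _).congr key.symm
  have hprob : IsProbabilityMeasure (μ[|A]) := cond_isProbabilityMeasure hA0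
  rw [relEnt, if_pos ⟨hac, hint⟩, integral_congr_ae key]
  simp

lemma sInf_le_add_infDist {X : Type*} [MetricSpace X] {A B : Set X} (hA : A.Nonempty)
    (hB : B.Nonempty) (x : X) :
    sInf (Set.image2 dist A B) ≤ Metric.infDist x A + Metric.infDist x B := by
  refine le_of_forall_pos_le_add fun ε hε => ?_
  obtain ⟨a, haA, ha⟩ := (Metric.infDist_lt_iff hA).1
    (lt_add_of_pos_right (Metric.infDist x A) (half_pos hε))
  obtain ⟨b, hbB, hb⟩ := (Metric.infDist_lt_iff hB).1
    (lt_add_of_pos_right (Metric.infDist x B) (half_pos hε))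
  have hbdd : BddBelow (Set.image2 dist A B) := by
    refine ⟨0, fun y hy => ?_⟩
    obtain ⟨a', _, b', _, rfl⟩ := hy
    exact dist_nonneg
  calc sInf (Set.image2 dist A B) ≤ dist a b := csInf_le hbdd (Set.mem_image2_of_mem haA hbB)
    _ ≤ dist a x + dist x b := dist_triangle a x b
    _ = dist x a + dist x b := by rw [dist_comm a x]
    _ ≤ Metric.infDist x A + Metric.infDist x B + ε := by linarith

lemma lintegral_infDist_le_wasserstein {X : Type*} [MetricSpace X] [MeasurableSpace X]
    [BorelSpace X] (μ : Measure X) [IsProbabilityMeasure μ] {A : Set X}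
    (hA : MeasurableSet A) (hA0 : μ A ≠ 0) :
    ∫⁻ x, ENNReal.ofReal (Metric.infDist x A) ∂μ ≤ wassersteinDist dist 1 μ (μ[|A]) := by
  rw [wassersteinDist, inv_one, ENNReal.rpow_one]
  refine le_iInf₂ fun π hπ => ?_
  obtain ⟨hπ1, hπ2⟩ := hπ
  have hmA : Measurable fun x : X => ENNReal.ofReal (Metric.infDist x A) :=
    (Metric.continuous_infDist_pt A).measurable.ennreal_ofReal
  have step1 : ∫⁻ x, ENNReal.ofReal (Metric.infDist x A) ∂μ
      = ∫⁻ q : X × X, ENNReal.ofReal (Metric.infDist q.1 A) ∂π := by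
    rw [← hπ1, lintegral_map hmA measurable_fst]
  rw [step1]
  refine lintegral_mono_ae ?_
  have h2 : ∀ᵐ q : X × X ∂π, q.2 ∈ A := by
    rw [ae_iff]
    have : π (Prod.snd ⁻¹' Aᶜ) = 0 := by
      rw [← Measure.map_apply measurable_snd hA.compl, hπ2, cond_apply hA]
      simp
    simpa [Set.preimage] using this
  filter_upwards [h2] with q hq
  rw [Real.rpow_one]
  exact ENNReal.ofReal_le_ofReal (Metric.infDist_le_dist_of_mem hq)

/-- **Marton's argument: from transportation to concentration.** If `μ` satisfies `T₁(c)`,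
then (i) for any two Borel sets `A`, `B` of positive measure,
`d(A,B) ≤ √(2c ln(1/μ(A))) + √(2c ln(1/μ(B)))`, and (ii) `μ` has Gaussian concentration:
for every Borel `A` with `μ(A) ≥ 1/2` and every `r ≥ √(2c ln 2)`,
`μ(A_r) ≥ 1 - exp(-(r - √(2c ln 2))²/(2c))`. -/
theorem marton_transportation_to_concentration {X : Type*} [MetricSpace X]
    [SecondCountableTopology X] [CompleteSpace X] [MeasurableSpace X] [BorelSpace X]
    (μ : Measure X) [IsProbabilityMeasure μ] {c : ℝ} (hc : 0 < c)
    (hT1 : SatisfiesTC dist 1 c μ) :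
    (∀ A B : Set X, MeasurableSet A → MeasurableSet B → 0 < μ A → 0 < μ B →
      sInf (Set.image2 dist A B) ≤
        Real.sqrt (2 * c * Real.log (1 / (μ A).toReal)) +
          Real.sqrt (2 * c * Real.log (1 / (μ B).toReal))) ∧
    (∀ A : Set X, MeasurableSet A → 1/2 ≤ μ A →
      ∀ r : ℝ, Real.sqrt (2 * c * Real.log 2) ≤ r →
        1 - ENNReal.ofReal
            (Real.exp (-(r - Real.sqrt (2 * c * Real.log 2))^2 / (2 * c))) ≤
          μ {x | Metric.infDist x A < r}) := by
  -- log nonneg for sets of positive measure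
  have hlog : ∀ (A : Set X), μ A ≠ 0 → 0 ≤ Real.log (1 / (μ A).toReal) := by
    intro A hA0
    refine Real.log_nonneg ?_
    have h1 : (μ A).toReal ≤ 1 := by
      have := ENNReal.toReal_mono (by simp) (prob_le_one (μ := μ) (s := A))
      simpa using this
    have h2 : 0 < (μ A).toReal := ENNReal.toReal_pos hA0 (measure_ne_top μ A)
    exact one_le_one_div h2 h1
  -- Wasserstein bound for conditional measures
  have hW : ∀ (A : Set X), MeasurableSet A → μ A ≠ 0 →
      wassersteinDist dist 1 μ (μ[|A]) ≤
        ENNReal.ofReal (Real.sqrt (2 * c * Real.log (1 / (μ A).toReal))) := by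
    intro A hA hA0
    have hprob : IsProbabilityMeasure (μ[|A]) := cond_isProbabilityMeasure hA0
    have h := hT1 (μ[|A]) hprob cond_absolutelyContinuous
    rw [relEnt_cond μ hA hA0] at h
    refine h.trans (le_of_eq ?_)
    have hL := hlog A hA0
    rw [← ENNReal.ofReal_mul (by linarith), ENNReal.ofReal_rpow_of_nonneg (by positivity)
      (by norm_num), Real.sqrt_eq_rpow]
  have part1 : ∀ A B : Set X, MeasurableSet A → MeasurableSet B → 0 < μ A → 0 < μ B →
      sInf (Set.image2 dist A B) ≤
        Real.sqrt (2 * c * Real.log (1 / (μ A).toReal)) +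
          Real.sqrt (2 * c * Real.log (1 / (μ B).toReal)) := by
    intro A B hA hB hA0 hB0
    have hA0' : μ A ≠ 0 := hA0.ne'
    have hB0' : μ B ≠ 0 := hB0.ne'
    have hAne : A.Nonempty := nonempty_of_measure_ne_zero hA0'
    have hBne : B.Nonempty := nonempty_of_measure_ne_zero hB0'
    set a := Real.sqrt (2 * c * Real.log (1 / (μ A).toReal)) with ha
    set b := Real.sqrt (2 * c * Real.log (1 / (μ B).toReal)) with hb
    have hmA : Measurable fun x : X => ENNReal.ofReal (Metric.infDist x A) :=
      (Metric.continuous_infDist_pt A).measurable.ennreal_ofReal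
    have key : ENNReal.ofReal (sInf (Set.image2 dist A B)) ≤
        ENNReal.ofReal a + ENNReal.ofReal b := by
      calc ENNReal.ofReal (sInf (Set.image2 dist A B))
          = ∫⁻ _, ENNReal.ofReal (sInf (Set.image2 dist A B)) ∂μ := by simp
        _ ≤ ∫⁻ x, (ENNReal.ofReal (Metric.infDist x A)
              + ENNReal.ofReal (Metric.infDist x B)) ∂μ := by
            refine lintegral_mono fun x => ?_
            rw [← ENNReal.ofReal_add Metric.infDist_nonneg Metric.infDist_nonneg]
            exact ENNReal.ofReal_le_ofReal (sInf_le_add_infDist hAne hBne x)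
        _ = (∫⁻ x, ENNReal.ofReal (Metric.infDist x A) ∂μ)
              + ∫⁻ x, ENNReal.ofReal (Metric.infDist x B) ∂μ := lintegral_add_left hmA _
        _ ≤ wassersteinDist dist 1 μ (μ[|A]) + wassersteinDist dist 1 μ (μ[|B]) :=
            add_le_add (lintegral_infDist_le_wasserstein μ hA hA0')
              (lintegral_infDist_le_wasserstein μ hB hB0')
        _ ≤ ENNReal.ofReal a + ENNReal.ofReal b :=
            add_le_add (hW A hA hA0') (hW B hB hB0')
    rw [← ENNReal.ofReal_add (Real.sqrt_nonneg _) (Real.sqrt_nonneg _)] at key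
    exact (ENNReal.ofReal_le_ofReal_iff (by positivity)).1 key
  refine ⟨part1, ?_⟩
  intro A hA hAhalf r hr
  set s := Real.sqrt (2 * c * Real.log 2) with hs
  set S := {x | Metric.infDist x A < r} with hS
  have hSm : MeasurableSet S :=
    measurableSet_lt (Metric.continuous_infDist_pt A).measurable measurable_const
  by_cases hB0 : μ Sᶜ = 0
  · have h1 : μ S = 1 := by
      rwa [prob_compl_eq_zero_iff hSm] at hB0
    rw [h1]
    exact tsub_le_self
  · have hApos : 0 < μ A := lt_of_lt_of_le (by norm_num) hAhalf
    have hBpos : 0 < μ Sᶜ := pos_iff_ne_zero.2 hB0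
    have h1 := part1 A Sᶜ hA hSm.compl hApos hBpos
    have hAne : A.Nonempty := nonempty_of_measure_ne_zero hApos.ne'
    have hBne : Sᶜ.Nonempty := nonempty_of_measure_ne_zero hB0
    -- r ≤ sInf
    have hr_sInf : r ≤ sInf (Set.image2 dist A Sᶜ) := by
      refine le_csInf (hAne.image2 hBne) ?_
      rintro y ⟨x, hx, z, hz, rfl⟩
      have hz' : r ≤ Metric.infDist z A := not_lt.1 hz
      calc r ≤ Metric.infDist z A := hz'
        _ ≤ dist z x := Metric.infDist_le_dist_of_mem hx
        _ = dist x z := dist_comm z x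
    -- √(2c L_A) ≤ s
    have hAtoReal : (1:ℝ)/2 ≤ (μ A).toReal := by
      have := ENNReal.toReal_mono (measure_ne_top μ A) hAhalf
      simpa using this
    have hsA : Real.sqrt (2 * c * Real.log (1 / (μ A).toReal)) ≤ s := by
      rw [hs]
      refine Real.sqrt_le_sqrt ?_
      refine mul_le_mul_of_nonneg_left ?_ (by linarith)
      refine Real.log_le_log (by positivity) ?_
      rw [div_le_iff₀ (by linarith)]
      linarith
    have hrs : r - s ≤ Real.sqrt (2 * c * Real.log (1 / (μ Sᶜ).toReal)) := by
      have := hr_sInf.trans h1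
      linarith
    have hLB : 0 ≤ Real.log (1 / (μ Sᶜ).toReal) := hlog Sᶜ hB0
    have hsq : (r - s)^2 ≤ 2 * c * Real.log (1 / (μ Sᶜ).toReal) := by
      have h0 : 0 ≤ r - s := by linarith
      calc (r - s)^2 ≤ (Real.sqrt (2 * c * Real.log (1 / (μ Sᶜ).toReal)))^2 :=
            pow_le_pow_left₀ h0 hrs 2
        _ = 2 * c * Real.log (1 / (μ Sᶜ).toReal) := Real.sq_sqrt (by positivity)
    have hBtop := measure_ne_top μ Sᶜ
    have hBr : 0 < (μ Sᶜ).toReal := ENNReal.toReal_pos hB0 hBtop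
    have hexp : (μ Sᶜ).toReal ≤ Real.exp (-(r - s)^2 / (2 * c)) := by
      have h2 : (r - s)^2 / (2 * c) ≤ Real.log (1 / (μ Sᶜ).toReal) := by
        rw [div_le_iff₀ (by linarith)]
        linarith [hsq]
      have h3 : Real.exp ((r - s)^2 / (2 * c)) ≤ 1 / (μ Sᶜ).toReal := by
        calc Real.exp ((r - s)^2 / (2 * c)) ≤ Real.exp (Real.log (1 / (μ Sᶜ).toReal)) :=
              Real.exp_le_exp.2 h2
          _ = 1 / (μ Sᶜ).toReal := Real.exp_log (by positivity)
      rw [neg_div, Real.exp_neg]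
      rw [one_div] at h3
      calc (μ Sᶜ).toReal = ((μ Sᶜ).toReal⁻¹)⁻¹ := (inv_inv _).symm
        _ ≤ (Real.exp ((r - s)^2 / (2 * c)))⁻¹ := inv_anti₀ (Real.exp_pos _) h3
    have hμB : μ Sᶜ ≤ ENNReal.ofReal (Real.exp (-(r - s)^2 / (2 * c))) := by
      rw [← ENNReal.ofReal_toReal hBtop]
      exact ENNReal.ofReal_le_ofReal hexp
    have hSS : μ S = 1 - μ Sᶜ := by
      have := prob_compl_eq_one_sub (μ := μ) hSm.compl
      rwa [compl_compl] at this
    rw [hSS]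
    exact tsub_le_tsub_left hμB 1
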